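/- Let A₀, ..., A_{m−1} be antichains of nonempty intervals of a finite totally ordered set. Every interval of the form I₀ ∪ I₁ ∪ ⋯ ∪ I_{m−1} with I_i ∈ A_i and I_{i−1} ≪ I_i for 0 < i < m (and where the union is an interval) is minimal under inclusion among all such intervals; i.e., the set of such concatenations forms an antichain. Here I ≪ J means every element of I is strictly less than every element of J. -/

import Mathlib

def IsInterval {O : Type*} [LinearOrder O] (X : Set O) : Prop :=
  ∀ x ∈ X, ∀ y ∈ X, ∀ z, x < z → z < y → z ∈ X

/-- `I ≪ J`: every element of `I` is strictly less than every element of `J`. -/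
def Ll {O : Type*} [LinearOrder O] (I J : Set O) : Prop :=
  ∀ x ∈ I, ∀ y ∈ J, x < y

lemma exists_max' {O : Type*} [LinearOrder O] [Fintype O] {X : Set O} (h : X.Nonempty) :
    ∃ b ∈ X, ∀ y ∈ X, y ≤ b := by
  obtain ⟨b, hb, hmax⟩ := Set.Finite.exists_maximalFor id X (Set.toFinite X) h
  exact ⟨b, hb, fun y hy => le_of_not_gt fun hlt => absurd (hmax hy hlt.le) (not_le.mpr hlt)⟩

lemma exists_min' {O : Type*} [LinearOrder O] [Fintype O] {X : Set O} (h : X.Nonempty) :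
    ∃ b ∈ X, ∀ y ∈ X, b ≤ y := by
  obtain ⟨b, hb, hmin⟩ := Set.Finite.exists_minimalFor id X (Set.toFinite X) h
  exact ⟨b, hb, fun y hy => le_of_not_gt fun hlt => absurd (hmin hy hlt.le) (not_le.mpr hlt)⟩

lemma ll_of_lt {O : Type*} [LinearOrder O] {m : ℕ} (I : Fin m → Set O)
    (hne : ∀ i, (I i).Nonempty)
    (hll : ∀ j : ℕ, ∀ h : j + 1 < m, Ll (I ⟨j, Nat.lt_of_succ_lt h⟩) (I ⟨j + 1, h⟩))
    {a b : Fin m} (hab : a < b) : Ll (I a) (I b) := by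
  suffices H : ∀ (b : ℕ) (hb : b < m) (a : Fin m), a.val < b → Ll (I a) (I ⟨b, hb⟩) by
    obtain ⟨b, hb⟩ := b
    exact H b hb a hab
  intro b
  induction b with
  | zero => intro hb a h; exact absurd h (Nat.not_lt_zero _)
  | succ n ih =>
    intro hb a h
    rcases Nat.lt_succ_iff_lt_or_eq.mp h with h | h
    · intro x hx y hy
      obtain ⟨z, hz⟩ := hne ⟨n, Nat.lt_of_succ_lt hb⟩
      exact lt_trans (ih (Nat.lt_of_succ_lt hb) a h x hx z hz) (hll n hb z hz y hy)
    · have ha : a = ⟨n, Nat.lt_of_succ_lt hb⟩ := Fin.ext h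
      rw [ha]; exact hll n hb

/-- the results of the BLOCK operator (unions `I₀ ∪ ⋯ ∪ I_{m−1}` with
`I_i ∈ A_i`, `I_{i−1} ≪ I_i`, whose union is an interval) form an antichain under
inclusion. -/
theorem stmt10 {O : Type*} [LinearOrder O] [Fintype O] {m : ℕ}
    (A : Fin m → Set (Set O))
    (hint : ∀ i, ∀ X ∈ A i, IsInterval X ∧ X.Nonempty)
    (hanti : ∀ i, IsAntichain (· ⊆ ·) (A i)) :
    IsAntichain (· ⊆ ·)
      {S : Set O | ∃ I : Fin m → Set O, (∀ i, I i ∈ A i) ∧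
        (∀ j : ℕ, ∀ h : j + 1 < m, Ll (I ⟨j, Nat.lt_of_succ_lt h⟩) (I ⟨j + 1, h⟩)) ∧
        IsInterval (⋃ i, I i) ∧ S = ⋃ i, I i} := by
  rintro S ⟨I, hI, hllI, -, rfl⟩ T ⟨J, hJ, hllJ, -, rfl⟩ hST hsub
  have hsub : (⋃ i, I i) ⊆ ⋃ i, J i := hsub
  have hIne : ∀ i, (I i).Nonempty := fun i => (hint i _ (hI i)).2
  have hJne : ∀ i, (J i).Nonempty := fun i => (hint i _ (hJ i)).2
  rcases Nat.eq_zero_or_pos m with hm | hm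
  · subst hm
    exact hST (by simp)
  have hllI' : ∀ {a b : Fin m}, a < b → Ll (I a) (I b) :=
    fun h => ll_of_lt I hIne hllI h
  have hllJ' : ∀ {a b : Fin m}, a < b → Ll (J a) (J b) :=
    fun h => ll_of_lt J hJne hllJ h
  choose β hβmem hβmax using fun i => exists_max' (hIne i)
  choose α hαmem hαmin using fun i => exists_min' (hIne i)
  choose δ hδmem hδmax using fun i => exists_max' (hJne i)
  choose γ hγmem hγmin using fun i => exists_min' (hJne i)
  have hTmem : ∀ i, ∀ x ∈ I i, ∃ j, x ∈ J j := by
    intro i x hx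
    exact Set.mem_iUnion.mp (hsub (Set.mem_iUnion.mpr ⟨i, hx⟩))
  -- Upward chain: max (I i) ≤ max (J i) propagates
  have hPstep : ∀ (n : ℕ) (h : n + 1 < m),
      δ ⟨n, Nat.lt_of_succ_lt h⟩ < β ⟨n, Nat.lt_of_succ_lt h⟩ →
      δ ⟨n + 1, h⟩ < β ⟨n + 1, h⟩ := by
    intro n h hP
    set i : Fin m := ⟨n, Nat.lt_of_succ_lt h⟩ with hi
    set i' : Fin m := ⟨n + 1, h⟩ with hi'
    have hii' : i < i' := by simp [hi, hi', Fin.lt_def]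
    by_cases hss : I i' ⊆ J i'
    · have heq : I i' = J i' := by
        by_contra hne'
        exact hanti i' (hI i') (hJ i') hne' hss
      obtain ⟨j, hj⟩ := hTmem i _ (hβmem i)
      rcases lt_trichotomy j i' with hji | hji | hji
      · have hj_le : j ≤ i := by
          have h1 : j.val < n + 1 := hji
          exact Nat.lt_succ_iff.mp h1
        rcases lt_or_eq_of_le hj_le with h2 | h2
        · exact absurd (hllJ' h2 _ hj _ (hδmem i)) (asymm hP)
        · rw [h2] at hj
          exact absurd hP (not_lt.mpr (hδmax i _ hj))
      · rw [hji, ← heq] at hj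
        exact absurd (hllI' hii' _ (hβmem i) _ hj) (lt_irrefl _)
      · have h1 : δ i' < β i := hllJ' hji _ (hδmem i') _ hj
        exact h1.trans (hllI' hii' _ (hβmem i) _ (hβmem i'))
    · obtain ⟨x, hx, hxJ⟩ := Set.not_subset.mp hss
      obtain ⟨j, hj⟩ := hTmem i' x hx
      have hβx : β i < x := hllI' hii' _ (hβmem i) _ hx
      have hδx : δ i < x := hP.trans hβx
      rcases lt_trichotomy j i' with hji | hji | hji
      · have hj_le : j ≤ i := by
          have h1 : j.val < n + 1 := hji
          exact Nat.lt_succ_iff.mp h1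
        rcases lt_or_eq_of_le hj_le with h2 | h2
        · exact absurd (hllJ' h2 _ hj _ (hδmem i)) (asymm hδx)
        · rw [h2] at hj
          exact absurd hδx (not_lt.mpr (hδmax i _ hj))
      · exact absurd (hji ▸ hj) hxJ
      · exact (hllJ' hji _ (hδmem i') _ hj).trans_le (hβmax i' _ hx)
  -- top index: max (I (m-1)) ≤ max (J (m-1))
  have hPlast : ∀ (h : m - 1 < m), ¬ (δ ⟨m - 1, h⟩ < β ⟨m - 1, h⟩) := by
    intro h hP
    set i : Fin m := ⟨m - 1, h⟩ with hi
    obtain ⟨j, hj⟩ := hTmem i _ (hβmem i)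
    have hj_le : j ≤ i := by
      have := j.isLt
      exact Fin.le_def.mpr (by simp [hi]; omega)
    rcases lt_or_eq_of_le hj_le with h2 | h2
    · exact absurd (hllJ' h2 _ hj _ (hδmem i)) (asymm hP)
    · rw [h2] at hj
      exact absurd hP (not_lt.mpr (hδmax i _ hj))
  have hPall : ∀ (n : ℕ) (h : n < m), ¬ (δ ⟨n, h⟩ < β ⟨n, h⟩) := by
    intro n h hP
    have key : ∀ k (hk : n + k < m), δ ⟨n + k, hk⟩ < β ⟨n + k, hk⟩ := by
      intro k
      induction k with
      | zero => intro hk; exact hP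
      | succ l ih => intro hk; exact hPstep (n + l) hk (ih (Nat.lt_of_succ_lt hk))
    have hk : n + (m - 1 - n) < m := by omega
    have hv := key (m - 1 - n) hk
    have hfin : (⟨n + (m - 1 - n), hk⟩ : Fin m) = ⟨m - 1, by omega⟩ := Fin.ext (by simp; omega)
    rw [hfin] at hv
    exact hPlast (by omega) hv
  -- Downward chain: min (J i) ≤ min (I i) propagates
  have hQstep : ∀ (n : ℕ) (h : n + 1 < m),
      α ⟨n + 1, h⟩ < γ ⟨n + 1, h⟩ →
      α ⟨n, Nat.lt_of_succ_lt h⟩ < γ ⟨n, Nat.lt_of_succ_lt h⟩ := by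
    intro n h hQ
    set i : Fin m := ⟨n, Nat.lt_of_succ_lt h⟩ with hi
    set i' : Fin m := ⟨n + 1, h⟩ with hi'
    have hii' : i < i' := by simp [hi, hi', Fin.lt_def]
    by_cases hss : I i ⊆ J i
    · have heq : I i = J i := by
        by_contra hne'
        exact hanti i (hI i) (hJ i) hne' hss
      obtain ⟨j, hj⟩ := hTmem i' _ (hαmem i')
      rcases lt_trichotomy j i with hji | hji | hji
      · have h1 : α i' < γ i := hllJ' hji _ hj _ (hγmem i)
        exact (hllI' hii' _ (hαmem i) _ (hαmem i')).trans h1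
      · rw [hji, ← heq] at hj
        exact absurd (hllI' hii' _ hj _ (hαmem i')) (lt_irrefl _)
      · have hj_ge : i' ≤ j := by
          have := Fin.lt_def.mp hji
          exact Fin.le_def.mpr (by simp [hi'] at *; omega)
        rcases lt_or_eq_of_le hj_ge with h2 | h2
        · exact absurd (hllJ' h2 _ (hγmem i') _ hj) (asymm hQ)
        · rw [← h2] at hj
          exact absurd hQ (not_lt.mpr (hγmin i' _ hj))
    · obtain ⟨x, hx, hxJ⟩ := Set.not_subset.mp hss
      obtain ⟨j, hj⟩ := hTmem i x hx
      have hxα : x < α i' := hllI' hii' _ hx _ (hαmem i')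
      have hxγ : x < γ i' := hxα.trans hQ
      rcases lt_trichotomy j i with hji | hji | hji
      · have h1 : x < γ i := hllJ' hji _ hj _ (hγmem i)
        exact lt_of_le_of_lt (hαmin i _ hx) h1
      · exact absurd (hji ▸ hj) hxJ
      · have hj_ge : i' ≤ j := by
          have := Fin.lt_def.mp hji
          exact Fin.le_def.mpr (by simp [hi'] at *; omega)
        rcases lt_or_eq_of_le hj_ge with h2 | h2
        · exact absurd (hllJ' h2 _ (hγmem i') _ hj) (asymm hxγ)
        · rw [← h2] at hj
          exact absurd hxγ (not_lt.mpr (hγmin i' _ hj))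
  have hQbase : ∀ (h : 0 < m), ¬ (α ⟨0, h⟩ < γ ⟨0, h⟩) := by
    intro h hQ
    set i : Fin m := ⟨0, h⟩ with hi
    obtain ⟨j, hj⟩ := hTmem i _ (hαmem i)
    have hj_ge : i ≤ j := Fin.le_def.mpr (by simp [hi])
    rcases lt_or_eq_of_le hj_ge with h2 | h2
    · exact absurd (hllJ' h2 _ (hγmem i) _ hj) (asymm hQ)
    · rw [← h2] at hj
      exact absurd hQ (not_lt.mpr (hγmin i _ hj))
  have hQall : ∀ (n : ℕ) (h : n < m), ¬ (α ⟨n, h⟩ < γ ⟨n, h⟩) := by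
    intro n
    induction n with
    | zero => exact hQbase
    | succ l ih => intro h hQ; exact ih (Nat.lt_of_succ_lt h) (hQstep l h hQ)
  -- Conclusion: I i = J i for all i
  have hIJ : ∀ i, I i = J i := by
    intro i
    have hsubJ : I i ⊆ J i := by
      intro x hx
      obtain ⟨j, hj⟩ := hTmem i x hx
      rcases lt_trichotomy j i with hji | hji | hji
      · have h1 : x < γ i := hllJ' hji _ hj _ (hγmem i)
        have h2 : γ i ≤ α i := not_lt.mp (hQall i.1 i.2)
        exact absurd ((h1.trans_le h2).trans_le (hαmin i x hx)) (lt_irrefl x)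
      · exact hji ▸ hj
      · have h1 : δ i < x := hllJ' hji _ (hδmem i) _ hj
        have h2 : β i ≤ δ i := not_lt.mp (hPall i.1 i.2)
        exact absurd (h1.trans_le ((hβmax i x hx).trans h2)) (lt_irrefl _)
    by_contra hne'
    exact hanti i (hI i) (hJ i) hne' hsubJ
  exact hST (Set.iUnion_congr hIJ)
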